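/- Let p and q be primes with p ≡ 1 (mod 4), q ≡ 3 (mod 4), and q a nonsquare modulo p (Legendre symbol (q|p) = −1). Then the quaternion algebra ℍ[ℚ, −q·p, −p] is the definite quaternion algebra of discriminant p: for every prime ℓ, the localization ℍ[ℚ_ℓ, −qp, −p] is a division ring if and only if ℓ = p, and ℍ[ℝ, −qp, −p] is a division ring. -/

import Mathlib

open Quaternion

section QA
variable {F : Type*} [Field F] {a b : F}

lemma QA.mul_star (x : ℍ[F,a,b]) :
    x * star x = ((x.re^2 - a*x.imI^2 - b*x.imJ^2 + a*b*x.imK^2 : F) : ℍ[F,a,b]) := by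
  rw [QuaternionAlgebra.mul_star_eq_coe]
  congr 1
  rw [QuaternionAlgebra.re_mul, QuaternionAlgebra.re_star, QuaternionAlgebra.imI_star,
    QuaternionAlgebra.imJ_star, QuaternionAlgebra.imK_star]
  ring

lemma QA.star_mul (x : ℍ[F,a,b]) :
    star x * x = ((x.re^2 - a*x.imI^2 - b*x.imJ^2 + a*b*x.imK^2 : F) : ℍ[F,a,b]) := by
  rw [star_comm_self', QA.mul_star]

lemma QA.isUnit_of_norm_ne_zero (x : ℍ[F,a,b])
    (h : x.re^2 - a*x.imI^2 - b*x.imJ^2 + a*b*x.imK^2 ≠ 0) : IsUnit x := by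
  set n : F := x.re^2 - a*x.imI^2 - b*x.imJ^2 + a*b*x.imK^2 with hn
  refine ⟨⟨x, star x * ((n⁻¹ : F) : ℍ[F,a,b]), ?_, ?_⟩, rfl⟩
  · rw [← mul_assoc, QA.mul_star, ← QuaternionAlgebra.coe_mul, mul_inv_cancel₀ h,
      QuaternionAlgebra.coe_one]
  · rw [mul_assoc, QuaternionAlgebra.coe_commutes, ← mul_assoc, QA.star_mul,
      ← QuaternionAlgebra.coe_mul, ← hn, mul_inv_cancel₀ h, QuaternionAlgebra.coe_one]

lemma QA.exists_not_isUnit (x y z : F) (hne : ¬(x = 0 ∧ y = 0 ∧ z = 0))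
    (h : x^2 - a*y^2 - b*z^2 = 0) :
    ∃ u : ℍ[F,a,b], u ≠ 0 ∧ ¬ IsUnit u := by
  refine ⟨⟨x,y,z,0⟩, ?_, ?_⟩
  · intro h0
    rw [QuaternionAlgebra.ext_iff] at h0
    exact hne ⟨h0.1, h0.2.1, h0.2.2.1⟩
  · intro hu
    have key : (⟨x,y,z,0⟩ : ℍ[F,a,b]) * star ⟨x,y,z,0⟩ = 0 := by
      rw [QA.mul_star]
      have : (x^2 - a*y^2 - b*z^2 + a*b*(0:F)^2 : F) = 0 := by linear_combination h
      rw [show ((⟨x,y,z,0⟩ : ℍ[F,a,b]).re^2 - a*(⟨x,y,z,0⟩ : ℍ[F,a,b]).imI^2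
        - b*(⟨x,y,z,0⟩ : ℍ[F,a,b]).imJ^2 + a*b*(⟨x,y,z,0⟩ : ℍ[F,a,b]).imK^2 : F)
        = (x^2 - a*y^2 - b*z^2 + a*b*(0:F)^2 : F) from rfl, this,
        QuaternionAlgebra.coe_zero]
    have hst : star (⟨x,y,z,0⟩ : ℍ[F,a,b]) = 0 := by
      obtain ⟨u, hu'⟩ := hu
      calc star (⟨x,y,z,0⟩ : ℍ[F,a,b]) = ↑u⁻¹ * (↑u * star (⟨x,y,z,0⟩ : ℍ[F,a,b])) := by
            rw [← mul_assoc]; simp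
        _ = 0 := by rw [hu', key, mul_zero]
    rw [QuaternionAlgebra.ext_iff] at hst
    simp only [QuaternionAlgebra.star_mk] at hst
    obtain ⟨h1, h2, h3, -⟩ := hst
    exact hne ⟨by simpa using h1, by simpa using h2, by simpa using h3⟩
end QA
open Polynomial

lemma PI.sq_of_approx {p : ℕ} [Fact p.Prime] (c r : ℤ_[p])
    (h : ‖c - r^2‖ < ‖2*r‖^2) : ∃ s : ℤ_[p], s^2 = c := by
  have hnorm : ‖(X^2 - C c : ℤ_[p][X]).eval r‖ < ‖(X^2 - C c : ℤ_[p][X]).derivative.eval r‖^2 := by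
    simp only [derivative_sub, derivative_X_pow, derivative_C, sub_zero, eval_sub, eval_pow,
      eval_X, eval_C, eval_mul, eval_natCast, pow_one]
    rw [norm_sub_rev]
    convert h using 3
    norm_num
  obtain ⟨z, hz, -⟩ := hensels_lemma hnorm
  refine ⟨z, by simpa [sub_eq_zero] using hz⟩

lemma PI.toZMod_eq_zero_iff {p : ℕ} [Fact p.Prime] (x : ℤ_[p]) :
    PadicInt.toZMod x = 0 ↔ ‖x‖ < 1 := by
  rw [← RingHom.mem_ker, PadicInt.ker_toZMod, IsLocalRing.mem_maximalIdeal, mem_nonunits_iff,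
    PadicInt.isUnit_iff]
  exact ⟨fun h => lt_of_le_of_ne (PadicInt.norm_le_one x) h, ne_of_lt⟩

lemma PI.sq_of_zmod_odd {p : ℕ} [Fact p.Prime] (hp : p ≠ 2) (c : ℤ)
    (hc0 : (c : ZMod p) ≠ 0) (hsq : IsSquare (c : ZMod p)) : ∃ s : ℚ_[p], s^2 = (c : ℚ_[p]) := by
  obtain ⟨m, hm⟩ := hsq
  set r : ℤ_[p] := ((m.val : ℕ) : ℤ_[p]) with hr
  have hred : PadicInt.toZMod r = m := by
    rw [hr, map_natCast, ZMod.natCast_val, ZMod.cast_id]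
  have h1 : ‖(c : ℤ_[p]) - r^2‖ < 1 := by
    rw [← PI.toZMod_eq_zero_iff, map_sub, map_pow, hred, map_intCast, hm]
    ring
  have h2 : ‖2*r‖ = 1 := by
    rcases lt_or_eq_of_le (PadicInt.norm_le_one (2*r)) with h | h
    · exfalso
      rw [← PI.toZMod_eq_zero_iff, map_mul, hred, map_ofNat] at h
      have h2ne : (2 : ZMod p) ≠ 0 := by
        intro h2
        have hd : p ∣ 2 := by
          rwa [show ((2:ZMod p)) = ((2:ℕ):ZMod p) by norm_num,
            ZMod.natCast_eq_zero_iff] at h2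
        exact hp ((Nat.prime_dvd_prime_iff_eq Fact.out Nat.prime_two).mp hd)
      have hmne : m ≠ 0 := by
        intro h0; rw [h0, mul_zero] at hm; exact hc0 (by rw [hm])
      exact (mul_ne_zero h2ne hmne) h
    · exact h
  obtain ⟨s, hs⟩ := PI.sq_of_approx ((c : ℤ_[p])) r (by rw [h2]; simpa using h1)
  refine ⟨(s : ℚ_[p]), ?_⟩
  have := congrArg (fun t : ℤ_[p] => (t : ℚ_[p])) hs
  push_cast at this ⊢
  exact this

lemma PI.sq_of_one_mod_eight (c : ℤ) (h8 : c % 8 = 1) : ∃ s : ℚ_[2], s^2 = (c : ℚ_[2]) := by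
  have hdvd : ((2:ℤ)^3) ∣ (c - 1) := by omega
  have hle : ‖((c - 1 : ℤ) : ℤ_[2])‖ ≤ (2:ℝ)^(-(3:ℤ)) := by
    have := (PadicInt.norm_int_le_pow_iff_dvd (k := c - 1) (n := 3) (p := 2)).mpr
      (by exact_mod_cast hdvd)
    simpa using this
  have h1 : ‖(c : ℤ_[2]) - 1^2‖ < ‖(2:ℤ_[2])*1‖^2 := by
    have heq : (c : ℤ_[2]) - 1^2 = ((c - 1 : ℤ) : ℤ_[2]) := by push_cast; ring
    have hn2 : ‖(2:ℤ_[2])*1‖ = (2:ℝ)⁻¹ := by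
      rw [mul_one, show ((2:ℤ_[2])) = ((2:ℕ):ℤ_[2]) by norm_num, PadicInt.norm_p]
      norm_num
    rw [heq, hn2]
    calc ‖((c - 1 : ℤ) : ℤ_[2])‖ ≤ (2:ℝ)^(-(3:ℤ)) := hle
      _ < (2:ℝ)⁻¹^2 := by norm_num
  obtain ⟨s, hs⟩ := PI.sq_of_approx ((c : ℤ_[2])) 1 h1
  refine ⟨(s : ℚ_[2]), ?_⟩
  have := congrArg (fun t : ℤ_[2] => (t : ℚ_[2])) hs
  push_cast at this ⊢
  exact this

-- key unit computation: if lift t has |t|=1 and u=-q is a nonsquare mod p, then |t^2+q|=1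
lemma PQ.norm_sq_add_q {p q : ℕ} [Fact p.Prime] (hq1 : ‖(q : ℚ_[p])‖ = 1)
    (hns : ¬ IsSquare ((-(q:ℤ) : ℤ) : ZMod p)) {t : ℚ_[p]} (ht : ‖t‖ = 1) :
    ‖t^2 + q‖ = 1 := by
  refine le_antisymm ?_ ?_
  · calc ‖t^2 + (q : ℚ_[p])‖ ≤ max ‖t^2‖ ‖(q : ℚ_[p])‖ := Padic.nonarchimedean _ _
      _ ≤ 1 := by rw [norm_pow, ht, hq1]; norm_num
  · by_contra hlt
    push_neg at hlt
    set T : ℤ_[p] := ⟨t, le_of_eq ht⟩ with hT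
    have hQ : ((T^2 + (q:ℤ_[p]) : ℤ_[p]) : ℚ_[p]) = t^2 + q := by
      push_cast [hT]
      rfl
    have hnorm : ‖T^2 + (q:ℤ_[p])‖ < 1 := by
      rw [PadicInt.norm_def, hQ]; exact hlt
    rw [← PI.toZMod_eq_zero_iff] at hnorm
    apply hns
    refine ⟨PadicInt.toZMod T, ?_⟩
    have : (PadicInt.toZMod T)^2 + (q : ZMod p) = 0 := by
      rw [← map_pow, ← map_natCast (PadicInt.toZMod (p := p)), ← map_add, hnorm]
    push_cast
    rw [← sq]
    linear_combination -this

lemma PQ.norm_form {p q : ℕ} [Fact p.Prime] (hq1 : ‖(q : ℚ_[p])‖ = 1)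
    (hns : ¬ IsSquare ((-(q:ℤ) : ℤ) : ZMod p)) (α β : ℚ_[p]) :
    ‖α^2 + q*β^2‖ = max ‖α‖ ‖β‖ ^ 2 := by
  have hna : ‖α^2‖ = ‖α‖^2 := by rw [norm_pow]
  have hnb : ‖(q : ℚ_[p])*β^2‖ = ‖β‖^2 := by rw [norm_mul, norm_pow, hq1, one_mul]
  rcases lt_trichotomy ‖α‖ ‖β‖ with h | h | h
  · rw [Padic.add_eq_max_of_ne (by rw [hna, hnb]; nlinarith [norm_nonneg α, norm_nonneg β]),
      hna, hnb, max_eq_right (by nlinarith [norm_nonneg α]), max_eq_right h.le]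
  · by_cases hb : β = 0
    · subst hb
      simp only [norm_zero, mul_zero, zero_pow, add_zero, hna] at *
      rw [max_eq_left (norm_nonneg α)]
      simp [hna]
    · have hb' : ‖β‖ ≠ 0 := by simpa using hb
      set s : ℚ_[p] := α / β with hs
      have hsn : ‖s‖ = 1 := by rw [hs, norm_div, h, div_self hb']
      have hfact : α^2 + q*β^2 = β^2 * (s^2 + q) := by
        rw [hs]; field_simp
        try ring
      rw [hfact, norm_mul, norm_pow, PQ.norm_sq_add_q hq1 hns hsn, mul_one, ← h,
        max_self]
  · rw [add_comm, Padic.add_eq_max_of_ne (by rw [hna, hnb]; nlinarith [norm_nonneg α, norm_nonneg β]),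
      hna, hnb, max_eq_right (by nlinarith [norm_nonneg β]), max_eq_left h.le]

lemma PQ.exists_norm_eq (p : ℕ) [Fact p.Prime] {α β : ℚ_[p]} (h : ¬(α = 0 ∧ β = 0)) :
    ∃ k : ℤ, max ‖α‖ ‖β‖ = (p:ℝ) ^ (-k) := by
  rcases max_choice ‖α‖ ‖β‖ with hm | hm <;> rw [hm]
  · rcases eq_or_ne α 0 with rfl | ha
    · -- then max = ‖0‖ = 0 but max ≥ ‖β‖ with β ≠ 0 : contradiction
      exfalso
      have hb : β ≠ 0 := fun hb => h ⟨rfl, hb⟩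
      have := le_max_right ‖(0:ℚ_[p])‖ ‖β‖
      rw [hm] at this
      simp only [norm_zero] at this
      exact hb (norm_le_zero_iff.mp this)
    · exact ⟨α.valuation, Padic.norm_eq_zpow_neg_valuation ha⟩
  · rcases eq_or_ne β 0 with rfl | hb
    · exfalso
      have ha : α ≠ 0 := fun ha => h ⟨ha, rfl⟩
      have := le_max_left ‖α‖ ‖(0:ℚ_[p])‖
      rw [hm] at this
      simp only [norm_zero] at this
      exact ha (norm_le_zero_iff.mp this)
    · exact ⟨β.valuation, Padic.norm_eq_zpow_neg_valuation hb⟩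

lemma PQ.aniso {p q : ℕ} [Fact p.Prime] (hq1 : ‖(q : ℚ_[p])‖ = 1)
    (hns : ¬ IsSquare ((-(q:ℤ) : ℤ) : ZMod p)) (x y z w : ℚ_[p])
    (h : (x^2 + q*((p:ℚ_[p])*w)^2) + p*(z^2 + q*y^2) = 0) :
    x = 0 ∧ y = 0 ∧ z = 0 ∧ w = 0 := by
  have hp1 : (1:ℝ) < p := by exact_mod_cast (Fact.out : p.Prime).one_lt
  have hp0 : (0:ℝ) < p := lt_trans one_pos hp1
  have hppos : (p:ℚ_[p]) ≠ 0 := by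
    exact Nat.cast_ne_zero.mpr (Fact.out : p.Prime).ne_zero
  by_cases h2 : z^2 + q*y^2 = 0
  · have hzy : z = 0 ∧ y = 0 := by
      have := PQ.norm_form hq1 hns z y
      rw [h2, norm_zero] at this
      have hmax : max ‖z‖ ‖y‖ = 0 := by nlinarith [le_max_left ‖z‖ ‖y‖, norm_nonneg z, norm_nonneg y, le_max_right ‖z‖ ‖y‖]
      constructor
      · exact norm_le_zero_iff.mp (le_trans (le_max_left _ _) hmax.le)
      · exact norm_le_zero_iff.mp (le_trans (le_max_right _ _) hmax.le)
    have h1 : x^2 + q*((p:ℚ_[p])*w)^2 = 0 := by rw [h2, mul_zero, add_zero] at h; exact h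
    have hxw : x = 0 ∧ (p:ℚ_[p])*w = 0 := by
      have := PQ.norm_form hq1 hns x ((p:ℚ_[p])*w)
      rw [h1, norm_zero] at this
      have hmax : max ‖x‖ ‖(p:ℚ_[p])*w‖ = 0 := by
        nlinarith [le_max_left ‖x‖ ‖(p:ℚ_[p])*w‖, norm_nonneg x, norm_nonneg ((p:ℚ_[p])*w), le_max_right ‖x‖ ‖(p:ℚ_[p])*w‖]
      constructor
      · exact norm_le_zero_iff.mp (le_trans (le_max_left _ _) hmax.le)
      · exact norm_le_zero_iff.mp (le_trans (le_max_right _ _) hmax.le)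
    exact ⟨hxw.1, hzy.2, hzy.1, by rcases mul_eq_zero.mp hxw.2 with h | h; exact absurd h hppos; exact h⟩
  · exfalso
    -- n₁ = -(p * n₂) nonzero, compare norms
    have h1 : x^2 + q*((p:ℚ_[p])*w)^2 = -((p:ℚ_[p]) * (z^2 + q*y^2)) := by linear_combination h
    have hn2pos : ‖z^2 + q*y^2‖ ≠ 0 := by simpa using h2
    have hnorm1 : ‖x^2 + q*((p:ℚ_[p])*w)^2‖ = (p:ℝ)⁻¹ * ‖z^2 + q*y^2‖ := by
      rw [h1, norm_neg, norm_mul, Padic.norm_p]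
    -- both sides are even/odd powers of p
    have hA := PQ.norm_form hq1 hns x ((p:ℚ_[p])*w)
    have hB := PQ.norm_form hq1 hns z y
    have hn1pos : ¬(x = 0 ∧ (p:ℚ_[p])*w = 0) := by
      rintro ⟨hx0, hw0⟩
      rw [hx0, hw0] at h1
      rw [show (0:ℚ_[p])^2 + q*(0:ℚ_[p])^2 = 0 by ring] at h1
      exact h2 (by
        have := h1.symm
        rw [neg_eq_zero] at this
        rcases mul_eq_zero.mp this with h' | h'
        · exact absurd h' hppos
        · exact h')
    obtain ⟨k₁, hk₁⟩ := PQ.exists_norm_eq p hn1pos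
    have hn2pos' : ¬(z = 0 ∧ y = 0) := by
      rintro ⟨hz0, hy0⟩; apply h2; rw [hz0, hy0]; ring
    obtain ⟨k₂, hk₂⟩ := PQ.exists_norm_eq p hn2pos'
    rw [hA, hB, hk₁, hk₂] at hnorm1
    rw [← zpow_natCast ((p:ℝ)^(-k₁)), ← zpow_natCast ((p:ℝ)^(-k₂)), ← zpow_mul, ← zpow_mul] at hnorm1
    rw [show (p:ℝ)⁻¹ = (p:ℝ)^(-1:ℤ) by simp, ← zpow_add₀ (ne_of_gt hp0)] at hnorm1
    have := zpow_right_injective₀ hp0 (ne_of_gt hp1) hnorm1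
    omega

lemma NT.facts (p q : ℕ) [Fact p.Prime] [Fact q.Prime] (hp4 : p % 4 = 1) (hq4 : q % 4 = 3)
    (hleg : legendreSym p q = -1) :
    ¬IsSquare ((-(q:ℤ) : ℤ) : ZMod p) ∧ IsSquare ((-(p:ℤ) : ℤ) : ZMod q) ∧ p ≠ q := by
  have hp2 : p ≠ 2 := by omega
  have hq2 : q ≠ 2 := by omega
  have hpq : p ≠ q := by
    intro h
    subst h
    rw [(legendreSym.eq_zero_iff p p).mpr (by exact_mod_cast ZMod.natCast_self p)] at hleg
    norm_num at hleg
  refine ⟨?_, ?_, hpq⟩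
  · rw [← legendreSym.eq_neg_one_iff (p := p)]
    rw [show -(q:ℤ) = -1 * q by ring, legendreSym.mul, legendreSym.at_neg_one hp2,
      ZMod.χ₄_nat_one_mod_four hp4, hleg]
    norm_num
  · have h0 : ((-(p:ℤ) : ℤ) : ZMod q) ≠ 0 := by
      have := ZMod.prime_ne_zero q p (Ne.symm hpq)
      intro h
      apply this
      push_cast at h
      rw [neg_eq_zero] at h
      exact_mod_cast h
    rw [← legendreSym.eq_one_iff (p := q) h0]
    rw [show -(p:ℤ) = -1 * p by ring, legendreSym.mul, legendreSym.at_neg_one hq2,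
      ZMod.χ₄_nat_three_mod_four hq4,
      legendreSym.quadratic_reciprocity_one_mod_four hp4 hq2, hleg]
    norm_num

lemma NT.exists_sol (ℓ : ℕ) [Fact ℓ.Prime] (hl2 : ℓ ≠ 2) (u v : ZMod ℓ) (hu : u ≠ 0) (hv : v ≠ 0) :
    ∃ y z : ZMod ℓ, u * y^2 + v * z^2 = 1 := by
  have h1 : (C u * X^2 : (ZMod ℓ)[X]).degree = 2 := by
    rw [Polynomial.degree_C_mul_X_pow 2 hu]; rfl
  obtain ⟨y, z, h⟩ := FiniteField.exists_root_sum_quadratic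
    (f := C u * X^2 + C (-1)) (g := C v * X^2)
    (by rw [Polynomial.degree_add_eq_left_of_degree_lt
          (by rw [h1]; exact lt_of_le_of_lt Polynomial.degree_C_le (by norm_num)), h1])
    (by rw [Polynomial.degree_C_mul_X_pow 2 hv]; rfl)
    (by rw [ZMod.card]; exact (Nat.Prime.mod_two_eq_one_iff_ne_two Fact.out).mpr hl2)
  refine ⟨y, z, ?_⟩
  simp only [eval_add, eval_mul, eval_C, eval_pow, eval_X] at h
  linear_combination h


/-- For primes `p ≡ 1 (mod 4)`, `q ≡ 3 (mod 4)` with `q` a nonsquare mod `p`, the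
quaternion algebra `ℍ[ℚ, -q·p, -p]` is the definite quaternion algebra of
discriminant `p`: it is division exactly at `ℝ` and at the prime `p`. -/
theorem quaternionAlgebra_neg_qp_neg_p_discriminant
    (p q : ℕ) [Fact p.Prime] [Fact q.Prime]
    (hp4 : p % 4 = 1) (hq4 : q % 4 = 3) (hleg : legendreSym p q = -1) :
    (∀ (ℓ : ℕ) [Fact ℓ.Prime],
      ((∀ x : ℍ[ℚ_[ℓ], (-((q : ℚ_[ℓ]) * (p : ℚ_[ℓ]))), (-(p : ℚ_[ℓ]))],
          x ≠ 0 → IsUnit x) ↔ ℓ = p)) ∧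
    (∀ x : ℍ[ℝ, (-((q : ℝ) * (p : ℝ))), (-(p : ℝ))], x ≠ 0 → IsUnit x) := by
  obtain ⟨hns, hsqB, hpq⟩ := NT.facts p q hp4 hq4 hleg
  have hp2 : p ≠ 2 := by omega
  have hq2 : q ≠ 2 := by omega
  constructor
  · intro ℓ hℓ
    constructor
    · -- division → ℓ = p
      intro hdiv
      by_contra hlp
      obtain ⟨x, y, z, hne, hrel⟩ :
          ∃ x y z : ℚ_[ℓ], ¬(x = 0 ∧ y = 0 ∧ z = 0) ∧
            x^2 - (-((q:ℚ_[ℓ])*(p:ℚ_[ℓ])))*y^2 - (-(p:ℚ_[ℓ]))*z^2 = 0 := by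
        by_cases hl2 : ℓ = 2
        · subst hl2
          -- 2-adic case
          have hq4' : (q:ℤ) % 4 = 3 := by exact_mod_cast hq4
          have hp4' : (p:ℤ) % 4 = 1 := by exact_mod_cast hp4
          have hqp4 : ((q:ℤ)*(p:ℤ)) % 4 = 3 := by
            rw [Int.mul_emod, hq4', hp4']; norm_num
          have h8 : (-((q:ℤ)*(p:ℤ))) % 8 = 1 ∨ (-((q:ℤ)*(p:ℤ))) % 8 = 5 := by omega
          rcases h8 with h8 | h8
          · obtain ⟨s, hs⟩ := PI.sq_of_one_mod_eight (-((q:ℤ)*(p:ℤ))) h8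
            refine ⟨s, 1, 0, by simp, ?_⟩
            have hs' : s^2 = -((q:ℚ_[2])*(p:ℚ_[2])) := by rw [hs]; push_cast; ring
            linear_combination hs'
          · obtain ⟨s, hs⟩ := PI.sq_of_one_mod_eight (-((q:ℤ)*(p:ℤ)) + 4*(-(p:ℤ)))
              (by omega)
            refine ⟨s, 1, 2, by simp, ?_⟩
            have hs' : s^2 = -((q:ℚ_[2])*(p:ℚ_[2])) + 4*(-(p:ℚ_[2])) := by
              rw [hs]; push_cast; ring
            linear_combination hs'
        · by_cases hlq : ℓ = q
          · subst hlq
            have h0 : ((-(p:ℤ) : ℤ) : ZMod ℓ) ≠ 0 := by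
              have := ZMod.prime_ne_zero ℓ p (Ne.symm hpq)
              intro h
              apply this
              push_cast at h
              rw [neg_eq_zero] at h
              exact_mod_cast h
            obtain ⟨s, hs⟩ := PI.sq_of_zmod_odd hl2 (-(p:ℤ)) h0 hsqB
            refine ⟨s, 0, 1, by simp, ?_⟩
            have hs' : s^2 = -(p:ℚ_[ℓ]) := by rw [hs]; push_cast; ring
            linear_combination hs'
          · -- generic odd place
            have hlq' : ℓ ≠ q := hlq
            have hu : ((-((q:ℤ)*(p:ℤ)) : ℤ) : ZMod ℓ) ≠ 0 := by
              intro h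
              rw [ZMod.intCast_zmod_eq_zero_iff_dvd] at h
              rw [dvd_neg] at h
              have : (ℓ:ℤ) ∣ (q:ℤ) ∨ (ℓ:ℤ) ∣ (p:ℤ) :=
                (Int.Prime.dvd_mul' Fact.out h)
              rcases this with h | h
              · exact hlq' ((Nat.prime_dvd_prime_iff_eq Fact.out Fact.out).mp
                  (Int.ofNat_dvd.mp h))
              · exact hlp ((Nat.prime_dvd_prime_iff_eq Fact.out Fact.out).mp
                  (Int.ofNat_dvd.mp h))
            have hv : ((-(p:ℤ) : ℤ) : ZMod ℓ) ≠ 0 := by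
              intro h
              rw [ZMod.intCast_zmod_eq_zero_iff_dvd, dvd_neg] at h
              exact hlp ((Nat.prime_dvd_prime_iff_eq Fact.out Fact.out).mp
                (Int.ofNat_dvd.mp h))
            obtain ⟨y0, z0, hyz⟩ := NT.exists_sol ℓ hl2 _ _ hu hv
            set t : ℤ := (-((q:ℤ)*(p:ℤ))) * (y0.val:ℤ)^2 + (-(p:ℤ)) * (z0.val:ℤ)^2 with ht
            have htz : (t : ZMod ℓ) = 1 := by
              rw [ht]
              push_cast [ZMod.natCast_val, ZMod.cast_id]
              push_cast at hyz
              linear_combination hyz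
            obtain ⟨s, hs⟩ := PI.sq_of_zmod_odd hl2 t (by rw [htz]; exact one_ne_zero)
              (by rw [htz]; exact ⟨1, (mul_one 1).symm⟩)
            have hs0 : s ≠ 0 := by
              intro h0
              rw [h0] at hs
              have ht0 : (t : ℚ_[ℓ]) = 0 := by rw [← hs]; ring
              have : (t : ℤ) = 0 := by exact_mod_cast ht0
              rw [this] at htz
              simp at htz
            refine ⟨s, ((y0.val : ℕ) : ℚ_[ℓ]), ((z0.val : ℕ) : ℚ_[ℓ]), fun h => hs0 h.1, ?_⟩
            have hs' : s^2 = -((q:ℚ_[ℓ])*(p:ℚ_[ℓ])) * ((y0.val : ℕ) : ℚ_[ℓ])^2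
                + (-(p:ℚ_[ℓ])) * ((z0.val : ℕ) : ℚ_[ℓ])^2 := by
              rw [hs, ht]; push_cast; ring
            linear_combination hs'
      obtain ⟨u, hu0, hun⟩ := QA.exists_not_isUnit x y z hne hrel
      exact hun (hdiv u hu0)
    · -- ℓ = p → division
      rintro rfl
      intro X hX
      apply QA.isUnit_of_norm_ne_zero
      intro hQ
      apply hX
      have hq1 : ‖(q : ℚ_[ℓ])‖ = 1 := by
        have h1 : ‖((q:ℤ) : ℚ_[ℓ])‖ ≤ 1 := Padic.norm_int_le_one _
        have h2 : ¬((ℓ:ℤ) ∣ (q:ℤ)) := by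
          intro hd
          exact hpq ((Nat.prime_dvd_prime_iff_eq Fact.out Fact.out).mp
            (Int.ofNat_dvd.mp hd))
        rw [← Padic.norm_intCast_lt_one_iff] at h2
        push_neg at h2
        have he : ((q:ℤ) : ℚ_[ℓ]) = (q : ℚ_[ℓ]) := by push_cast; rfl
        rw [he] at h1 h2
        linarith
      have := PQ.aniso (q := q) hq1 hns X.re X.imI X.imJ X.imK (by linear_combination hQ)
      obtain ⟨h1, h2, h3, h4⟩ := this
      ext <;> simp [h1, h2, h3, h4]
  · -- real case
    intro X hX
    apply QA.isUnit_of_norm_ne_zero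
    intro hQ
    apply hX
    have hp0 : (0:ℝ) < p := by exact_mod_cast (Fact.out : p.Prime).pos
    have hq0 : (0:ℝ) < q := by exact_mod_cast (Fact.out : q.Prime).pos
    have e1 : X.re = 0 := by
      have h' : X.re^2 = 0 := by
        nlinarith [sq_nonneg X.imI, sq_nonneg X.imJ, sq_nonneg X.imK, sq_nonneg X.re, mul_pos hq0 hp0, mul_pos (mul_pos hq0 hp0) hp0]
      exact pow_eq_zero_iff two_ne_zero |>.mp h'
    have e2 : X.imI = 0 := by
      have h' : X.imI^2 = 0 := by
        nlinarith [sq_nonneg X.re, sq_nonneg X.imI, sq_nonneg X.imJ, sq_nonneg X.imK, mul_pos hq0 hp0, mul_pos (mul_pos hq0 hp0) hp0]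
      exact pow_eq_zero_iff two_ne_zero |>.mp h'
    have e3 : X.imJ = 0 := by
      have h' : X.imJ^2 = 0 := by
        nlinarith [sq_nonneg X.re, sq_nonneg X.imI, sq_nonneg X.imJ, sq_nonneg X.imK, mul_pos hq0 hp0, mul_pos (mul_pos hq0 hp0) hp0]
      exact pow_eq_zero_iff two_ne_zero |>.mp h'
    have e4 : X.imK = 0 := by
      have h' : X.imK^2 = 0 := by
        nlinarith [sq_nonneg X.re, sq_nonneg X.imI, sq_nonneg X.imJ, sq_nonneg X.imK, mul_pos hq0 hp0, mul_pos (mul_pos hq0 hp0) hp0]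
      exact pow_eq_zero_iff two_ne_zero |>.mp h'
    ext <;> simp [e1, e2, e3, e4]
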